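/- Let (H, α, σ̄) be a unicellular map of genus g+1 and let a₁, a₂, a₃ be three half-edges belonging to a single cycle v̄ of σ̄ which are intertwined, i.e. they do not appear in the same cyclic order in the cycle of γ̄ = ασ̄ as in the cycle v̄. Writing v̄ = (a₁, h¹₂,...,h^{m₂}₂, a₂, h¹₃,...,h^{m₃}₃, a₃, h¹₁,...,h^{m₁}₁) and replacing v̄ in σ̄ by the product of three cycles (a₁,h¹₁,...,h^{m₁}₁)(a₂,h¹₂,...,h^{m₂}₂)(a₃,h¹₃,...,h^{m₃}₃) yields a permutation σ such that ασ is a single cycle; the resulting unicellular map has genus g. -/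
import Mathlib


open Equiv

/-- Number of cycles of a permutation (fixed points count as cycles). -/
noncomputable def cycleCount {H : Type*} [Fintype H] [DecidableEq H]
    (σ : Equiv.Perm H) : ℕ :=
  σ.cycleType.card + Fintype.card {x // σ x = x}

/-- `hitTime f x y` is the least positive `k` with `f^k x = y` (the position
of `y` in the `f`-orbit starting just after `x`); `0` if there is none. -/
noncomputable def hitTime {H : Type*} (f : Equiv.Perm H) (x y : H) : ℕ :=
  sInf {k : ℕ | 0 < k ∧ (f ^ k) x = y}

set_option linter.unusedSectionVars false

namespace SlicingAux

open Equiv.Perm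

variable {H : Type*} [Fintype H] [DecidableEq H]

lemma sameCycle_iff_nat (f : Perm H) (x y : H) :
    f.SameCycle x y ↔ ∃ i : ℕ, (f ^ i) x = y := by
  constructor
  · intro h
    obtain ⟨i, _, h⟩ := h.exists_pow_eq'
    exact ⟨i, h⟩
  · rintro ⟨i, h⟩
    exact ⟨(i : ℤ), by rw [zpow_natCast]; exact h⟩

lemma exists_pos_pow {f : Perm H} {x y : H} (h : f.SameCycle x y) :
    ∃ k : ℕ, 0 < k ∧ (f ^ k) x = y := by
  obtain ⟨i, hi⟩ := (sameCycle_iff_nat f x y).mp h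
  rcases Nat.eq_zero_or_pos i with rfl | hpos
  · refine ⟨orderOf f, orderOf_pos f, ?_⟩
    simp only [pow_zero, Equiv.Perm.one_apply] at hi
    rw [pow_orderOf_eq_one]
    simpa using hi
  · exact ⟨i, hpos, hi⟩

lemma hitTime_spec {f : Perm H} {x y : H} (h : f.SameCycle x y) :
    0 < hitTime f x y ∧ (f ^ hitTime f x y) x = y :=
  Nat.sInf_mem (exists_pos_pow h)

lemma hitTime_min {f : Perm H} {x y : H} {j : ℕ} (hj : 0 < j) (hlt : j < hitTime f x y) :
    (f ^ j) x ≠ y := by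
  intro he
  have : hitTime f x y ≤ j := Nat.sInf_le (show j ∈ {k : ℕ | 0 < k ∧ (f ^ k) x = y} from ⟨hj, he⟩)
  omega

lemma pow_mod_apply (g : Perm H) (y : H) {k : ℕ} (hfix : (g ^ k) y = y) (i : ℕ) :
    (g ^ i) y = (g ^ (i % k)) y := by
  have hq : ∀ q : ℕ, ((g ^ k) ^ q) y = y := by
    intro q
    induction q with
    | zero => rfl
    | succ q ih => rw [pow_succ, Equiv.Perm.mul_apply, hfix, ih]
  conv_lhs => rw [← Nat.mod_add_div i k]
  rw [pow_add, Equiv.Perm.mul_apply, pow_mul, hq]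

lemma W1 (f : Perm H) (x y z : H) (m : ℕ)
    (h : ∀ j, j < m → (f ^ j) z ≠ x ∧ (f ^ j) z ≠ y) :
    ((f * Equiv.swap x y) ^ m) z = (f ^ m) z := by
  induction m with
  | zero => rfl
  | succ m ih =>
    have ihm := ih fun j hj => h j (hj.trans (Nat.lt_succ_self m))
    rw [pow_succ', Equiv.Perm.mul_apply, ihm, Equiv.Perm.mul_apply,
      Equiv.swap_apply_of_ne_of_ne (h m (Nat.lt_succ_self m)).1 (h m (Nat.lt_succ_self m)).2,
      ← Equiv.Perm.mul_apply, ← pow_succ']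

lemma W2 (f : Perm H) (x y : H) (m : ℕ) (hm : 1 ≤ m)
    (h : ∀ j, 0 < j → j < m → (f ^ j) x ≠ x ∧ (f ^ j) x ≠ y) :
    ((f * Equiv.swap x y) ^ m) y = (f ^ m) x := by
  induction m, hm using Nat.le_induction with
  | base =>
    simp [Equiv.Perm.mul_apply, Equiv.swap_apply_right]
  | succ m hm ih =>
    have ihm := ih fun j hj hjm => h j hj (hjm.trans (Nat.lt_succ_self m))
    have hmm := h m hm (Nat.lt_succ_self m)
    rw [pow_succ', Equiv.Perm.mul_apply, ihm, Equiv.Perm.mul_apply,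
      Equiv.swap_apply_of_ne_of_ne hmm.1 hmm.2, ← Equiv.Perm.mul_apply, ← pow_succ']

end SlicingAux

namespace SlicingAux

variable {H : Type*} [Fintype H] [DecidableEq H]

def orbSetoid (f : Perm H) : Setoid H :=
  ⟨f.SameCycle, ⟨Equiv.Perm.SameCycle.refl f, fun h => h.symm, fun h1 h2 => h1.trans h2⟩⟩

lemma fixed_eq_of_sameCycle {f : Perm H} {z w : H} (h : f.SameCycle z w) (hz : f z = z) :
    w = z := by
  obtain ⟨i, hi⟩ := h
  rw [Equiv.Perm.zpow_apply_eq_self_of_apply_eq_self hz] at hi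
  exact hi.symm

noncomputable def toSum (f : Perm H) (z : H) :
    {c // c ∈ f.cycleFactorsFinset} ⊕ {w : H // f w = w} :=
  if h : f z = z then Sum.inr ⟨z, h⟩
  else Sum.inl ⟨f.cycleOf z,
    Equiv.Perm.cycleOf_mem_cycleFactorsFinset_iff.mpr (Equiv.Perm.mem_support.mpr h)⟩

lemma toSum_const (f : Perm H) {z w : H} (h : f.SameCycle z w) : toSum f z = toSum f w := by
  by_cases hz : f z = z
  · obtain rfl := fixed_eq_of_sameCycle h hz
    rfl
  · have hw : f w ≠ w := by
      intro hw
      obtain rfl := fixed_eq_of_sameCycle h.symm hw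
      exact hz hw
    simp only [toSum, dif_neg hz, dif_neg hw]
    exact congrArg Sum.inl (Subtype.ext h.cycleOf_eq)

noncomputable def classEquiv (f : Perm H) :
    Quotient (orbSetoid f) ≃ ({c // c ∈ f.cycleFactorsFinset} ⊕ {w : H // f w = w}) := by
  refine Equiv.ofBijective
    (Quotient.lift (toSum f) fun _ _ h => toSum_const f h) ⟨?_, ?_⟩
  · intro a b
    refine Quotient.inductionOn₂ a b fun z w h => Quotient.sound ?_
    have h' : toSum f z = toSum f w := h
    unfold toSum at h'
    by_cases hz : f z = z <;> by_cases hw : f w = w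
    · rw [dif_pos hz, dif_pos hw] at h'
      simp only [Sum.inr.injEq, Subtype.mk.injEq] at h'
      subst h'
      exact Equiv.Perm.SameCycle.refl f z
    · rw [dif_pos hz, dif_neg hw] at h'
      exact absurd h' (by simp)
    · rw [dif_neg hz, dif_pos hw] at h'
      exact absurd h' (by simp)
    · rw [dif_neg hz, dif_neg hw] at h'
      simp only [Sum.inl.injEq, Subtype.mk.injEq] at h'
      have hcyc : f.cycleOf z = f.cycleOf w := h'
      have hws : w ∈ (f.cycleOf w).support :=
        Equiv.Perm.mem_support_cycleOf_iff.mpr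
          ⟨Equiv.Perm.SameCycle.refl f w, Equiv.Perm.mem_support.mpr hw⟩
      rw [← hcyc] at hws
      exact (Equiv.Perm.mem_support_cycleOf_iff.mp hws).1
  · rintro (⟨c, hc⟩ | ⟨z, hz⟩)
    · obtain ⟨hcyc, hsupp⟩ := Equiv.Perm.mem_cycleFactorsFinset_iff.mp hc
      obtain ⟨z, hz, -⟩ := hcyc
      have hzs : z ∈ c.support := Equiv.Perm.mem_support.mpr hz
      have hfz : f z ≠ z := fun h => hz ((hsupp z hzs).trans h)
      refine ⟨Quotient.mk _ z, ?_⟩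
      simp only [Quotient.lift_mk, toSum, dif_neg hfz]
      exact congrArg Sum.inl (Subtype.ext (Equiv.Perm.cycle_is_cycleOf hzs hc).symm)
    · exact ⟨Quotient.mk _ z, by simp [toSum, hz]⟩

lemma cycleCount_eq (f : Perm H) :
    cycleCount f = Nat.card (Quotient (orbSetoid f)) := by
  rw [Nat.card_congr (classEquiv f), Nat.card_eq_fintype_card, Fintype.card_sum,
    Fintype.card_coe]
  unfold cycleCount
  congr 1
  show Multiset.card (f.cycleFactorsFinset.1.map _) = _
  rw [Multiset.card_map]
  rfl

end SlicingAux

namespace SlicingAux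

variable {H : Type*} [Fintype H] [DecidableEq H]

lemma sc_step (f : Perm H) {x y : H} (hsc : f.SameCycle x y) (z : H) :
    f.SameCycle z ((f * Equiv.swap x y) z) := by
  rcases eq_or_ne z x with rfl | hzx
  · rw [Equiv.Perm.mul_apply, Equiv.swap_apply_left]
    exact hsc.trans ⟨1, by simp⟩
  rcases eq_or_ne z y with rfl | hzy
  · rw [Equiv.Perm.mul_apply, Equiv.swap_apply_right]
    exact hsc.symm.trans ⟨1, by simp⟩
  · rw [Equiv.Perm.mul_apply, Equiv.swap_apply_of_ne_of_ne hzx hzy]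
    exact ⟨1, by simp⟩

/-- F1: in the split case the new orbits refine the old ones. -/
lemma F1 (f : Perm H) {x y : H} (hsc : f.SameCycle x y) {z w : H}
    (h : (f * Equiv.swap x y).SameCycle z w) : f.SameCycle z w := by
  obtain ⟨i, hi⟩ := (sameCycle_iff_nat _ z w).mp h
  have key : ∀ i : ℕ, f.SameCycle z (((f * Equiv.swap x y) ^ i) z) := by
    intro i
    induction i with
    | zero => exact Equiv.Perm.SameCycle.refl f z
    | succ i ih =>
      rw [pow_succ', Equiv.Perm.mul_apply]
      exact ih.trans (sc_step f hsc _)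
  rw [← hi]
  exact key i

lemma hitA (f : Perm H) {x y : H} (hsc : f.SameCycle x y) :
    ∀ j, 0 < j → j < hitTime f x y → (f ^ j) x ≠ x ∧ (f ^ j) x ≠ y := by
  obtain ⟨hkpos, hkeq⟩ := hitTime_spec hsc
  intro j hj hjk
  refine ⟨?_, hitTime_min hj hjk⟩
  intro he
  have h1 : (f ^ (hitTime f x y - j)) ((f ^ j) x) = y := by
    rw [← Equiv.Perm.mul_apply, ← pow_add, Nat.sub_add_cancel hjk.le]
    exact hkeq
  rw [he] at h1
  exact hitTime_min (by omega) (by omega) h1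

/-- F4: the split separates `x` from `y`. -/
lemma F4 (f : Perm H) {x y : H} (hxy : x ≠ y) (hsc : f.SameCycle x y) :
    ¬ (f * Equiv.swap x y).SameCycle x y := by
  obtain ⟨hkpos, hkeq⟩ := hitTime_spec hsc
  intro hcon
  obtain ⟨i, hi⟩ := (sameCycle_iff_nat _ y x).mp hcon.symm
  have hgk : ((f * Equiv.swap x y) ^ hitTime f x y) y = y := by
    rw [W2 f x y _ hkpos (hitA f hsc)]
    exact hkeq
  rw [pow_mod_apply _ _ hgk i] at hi
  have hrk : i % hitTime f x y < hitTime f x y := Nat.mod_lt _ hkpos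
  rcases Nat.eq_zero_or_pos (i % hitTime f x y) with h0 | hrpos
  · rw [h0] at hi
    simp only [pow_zero, Equiv.Perm.one_apply] at hi
    exact hxy hi.symm
  · rw [W2 f x y _ hrpos (fun j h1 h2 => hitA f hsc j h1 (h2.trans hrk))] at hi
    exact (hitA f hsc _ hrpos hrk).1 hi

/-- F2: orbits not containing `x` are unchanged. -/
lemma F2 (f : Perm H) {x y z w : H} (hsc : f.SameCycle x y)
    (hzw : f.SameCycle z w) (hnx : ¬ f.SameCycle x z) :
    (f * Equiv.swap x y).SameCycle z w := by
  obtain ⟨i, hi⟩ := (sameCycle_iff_nat f z w).mp hzw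
  have hW : ((f * Equiv.swap x y) ^ i) z = (f ^ i) z := by
    refine W1 f x y z i fun j hj => ⟨?_, ?_⟩
    · intro he
      exact hnx (Equiv.Perm.SameCycle.symm ⟨(j : ℤ), by rw [zpow_natCast]; exact he⟩)
    · intro he
      have : f.SameCycle z y := ⟨(j : ℤ), by rw [zpow_natCast]; exact he⟩
      exact hnx (hsc.trans this.symm)
  exact (sameCycle_iff_nat _ z w).mpr ⟨i, hW.trans hi⟩

lemma hit_lt_period (f : Perm H) {x y : H} (hxy : x ≠ y) (hsc : f.SameCycle x y) :
    hitTime f x y < hitTime f x x := by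
  obtain ⟨hkpos, hkeq⟩ := hitTime_spec hsc
  obtain ⟨hPpos, hPeq⟩ := hitTime_spec (Equiv.Perm.SameCycle.refl f x)
  rcases lt_trichotomy (hitTime f x y) (hitTime f x x) with h | h | h
  · exact h
  · exact absurd (hkeq.symm.trans (h ▸ hPeq)) hxy.symm
  · exfalso
    have h1 : (f ^ (hitTime f x y - hitTime f x x)) x = y := by
      have : (f ^ (hitTime f x y - hitTime f x x)) ((f ^ hitTime f x x) x) = y := by
        rw [← Equiv.Perm.mul_apply, ← pow_add, Nat.sub_add_cancel h.le]
        exact hkeq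
      rwa [hPeq] at this
    exact hitTime_min (by omega) (by omega) h1

/-- F3: the two new orbits cover the old orbit of `x`. -/
lemma F3 (f : Perm H) {x y z : H} (hxy : x ≠ y) (hsc : f.SameCycle x y)
    (hz : f.SameCycle x z) :
    (f * Equiv.swap x y).SameCycle x z ∨ (f * Equiv.swap x y).SameCycle y z := by
  obtain ⟨hkpos, hkeq⟩ := hitTime_spec hsc
  obtain ⟨hPpos, hPeq⟩ := hitTime_spec (Equiv.Perm.SameCycle.refl f x)
  set k := hitTime f x y with hk
  set P := hitTime f x x with hP
  have hkP : k < P := hit_lt_period f hxy hsc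
  obtain ⟨i, hi⟩ := (sameCycle_iff_nat f x z).mp hz
  rw [pow_mod_apply f x hPeq i] at hi
  set r := i % P with hr
  have hrP : r < P := Nat.mod_lt _ hPpos
  rcases Nat.eq_zero_or_pos r with h0 | hrpos
  · left
    rw [h0] at hi
    simp only [pow_zero, Equiv.Perm.one_apply] at hi
    rw [← hi]
  rcases lt_trichotomy r k with hlt | heq | hgt
  · right
    have hW := W2 f x y r hrpos (fun j h1 h2 => hitA f hsc j h1 (h2.trans hlt))
    exact ⟨(r : ℤ), by rw [zpow_natCast, hW]; exact hi⟩
  · right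
    rw [← heq] at hkeq
    rw [hkeq] at hi
    rw [← hi]
  · left
    have hcond : ∀ j, 0 < j → j < r - k → (f ^ j) y ≠ y ∧ (f ^ j) y ≠ x := by
      intro j hj hjrk
      have hjy : (f ^ j) y = (f ^ (j + k)) x := by
        rw [pow_add, Equiv.Perm.mul_apply, hkeq]
      constructor
      · intro he
        rw [hjy, ← hkeq] at he
        have : (f ^ k) ((f ^ j) x) = (f ^ k) x := by
          rw [← Equiv.Perm.mul_apply, ← pow_add, Nat.add_comm k j]
          exact he
        have h2 := (f ^ k).injective this
        exact hitTime_min hj (by omega) h2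
      · intro he
        rw [hjy] at he
        exact hitTime_min (by omega) (by omega) he
    have hW := W2 f y x (r - k) (by omega) hcond
    rw [Equiv.swap_comm y x] at hW
    have hfy : (f ^ (r - k)) y = (f ^ r) x := by
      rw [← hkeq, ← Equiv.Perm.mul_apply, ← pow_add, Nat.sub_add_cancel hgt.le]
    refine ⟨((r - k : ℕ) : ℤ), ?_⟩
    rw [zpow_natCast, hW, hfy]
    exact hi

/-- In the merge case, `x` and `y` become connected. -/
lemma sameCycle_merge (f : Perm H) {x y : H} (hns : ¬ f.SameCycle x y) :
    (f * Equiv.swap x y).SameCycle x y := by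
  obtain ⟨hkpos, hkeq⟩ := hitTime_spec (Equiv.Perm.SameCycle.refl f y)
  have hcond : ∀ j, 0 < j → j < hitTime f y y → (f ^ j) y ≠ y ∧ (f ^ j) y ≠ x := by
    intro j hj hjk
    refine ⟨hitTime_min hj hjk, fun he => ?_⟩
    exact hns (Equiv.Perm.SameCycle.symm ⟨(j : ℤ), by rw [zpow_natCast]; exact he⟩)
  have hW := W2 f y x (hitTime f y y) hkpos hcond
  rw [Equiv.swap_comm y x] at hW
  exact ⟨((hitTime f y y : ℕ) : ℤ), by rw [zpow_natCast, hW]; exact hkeq⟩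

end SlicingAux

namespace SlicingAux

variable {H : Type*} [Fintype H] [DecidableEq H]

/-- Splitting a cycle at two of its points increases the orbit count by one. -/
lemma split_count (f : Perm H) {x y : H} (hxy : x ≠ y) (hsc : f.SameCycle x y) :
    cycleCount (f * Equiv.swap x y) = cycleCount f + 1 := by
  classical
  set g := f * Equiv.swap x y with hg
  have hF1 : ∀ {z w : H}, g.SameCycle z w → f.SameCycle z w := fun h => F1 f hsc h
  have hF4 : ¬ g.SameCycle x y := F4 f hxy hsc
  have wd1 : ∀ z w : H, (orbSetoid g).r z w →
      (if g.SameCycle y z then (none : Option (Quotient (orbSetoid f)))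
        else some (Quotient.mk (orbSetoid f) z)) =
      (if g.SameCycle y w then none else some (Quotient.mk (orbSetoid f) w)) := by
    intro z w h
    by_cases hyz : g.SameCycle y z
    · rw [if_pos hyz, if_pos (hyz.trans h)]
    · have hyw : ¬ g.SameCycle y w := fun hc => hyz (hc.trans h.symm)
      rw [if_neg hyz, if_neg hyw]
      exact congrArg some (Quotient.sound (hF1 h))
  have wd2 : ∀ z w : H, (orbSetoid f).r z w →
      (if f.SameCycle x z then Quotient.mk (orbSetoid g) x else Quotient.mk (orbSetoid g) z) =
      (if f.SameCycle x w then Quotient.mk (orbSetoid g) x else Quotient.mk (orbSetoid g) w) := by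
    intro z w h
    by_cases hxz : f.SameCycle x z
    · rw [if_pos hxz, if_pos (hxz.trans h)]
    · have hxw : ¬ f.SameCycle x w := fun hc => hxz (hc.trans h.symm)
      rw [if_neg hxz, if_neg hxw]
      exact Quotient.sound (F2 f hsc h hxz)
  let e : Quotient (orbSetoid g) ≃ Option (Quotient (orbSetoid f)) :=
    { toFun := Quotient.lift _ wd1
      invFun := fun o => o.elim (Quotient.mk (orbSetoid g) y) (Quotient.lift _ wd2)
      left_inv := by
        intro a
        refine Quotient.inductionOn a fun z => ?_
        by_cases hyz : g.SameCycle y z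
        · simp only [Quotient.lift_mk, if_pos hyz, Option.elim]
          exact Quotient.sound hyz
        · simp only [Quotient.lift_mk, if_neg hyz, Option.elim]
          by_cases hxz : f.SameCycle x z
          · rw [if_pos hxz]
            rcases F3 f hxy hsc hxz with h | h
            · exact Quotient.sound h
            · exact absurd h hyz
          · rw [if_neg hxz]
      right_inv := by
        intro o
        rcases o with _ | a
        · simp only [Option.elim, Quotient.lift_mk]
          rw [if_pos (Equiv.Perm.SameCycle.refl g y)]
        · refine Quotient.inductionOn a fun z => ?_
          simp only [Option.elim, Quotient.lift_mk]
          by_cases hxz : f.SameCycle x z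
          · rw [if_pos hxz]
            simp only [Quotient.lift_mk]
            rw [if_neg (fun hc => hF4 hc.symm)]
            exact congrArg some (Quotient.sound hxz)
          · rw [if_neg hxz]
            simp only [Quotient.lift_mk]
            have hyz : ¬ g.SameCycle y z := fun hc => hxz (hsc.trans (hF1 hc))
            rw [if_neg hyz] }
  haveI : Fintype (Quotient (orbSetoid f)) := Quotient.fintype _
  haveI : Fintype (Quotient (orbSetoid g)) := Quotient.fintype _
  rw [cycleCount_eq g, cycleCount_eq f, Nat.card_congr e, Nat.card_eq_fintype_card,
    Nat.card_eq_fintype_card, Fintype.card_option]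

/-- Merging two cycles decreases the orbit count by one. -/
lemma merge_count (f : Perm H) {x y : H} (hxy : x ≠ y) (hns : ¬ f.SameCycle x y) :
    cycleCount (f * Equiv.swap x y) + 1 = cycleCount f := by
  have h2 := split_count (f * Equiv.swap x y) hxy (sameCycle_merge f hns)
  rw [mul_assoc, Equiv.swap_mul_self, mul_one] at h2
  omega

lemma cycleCount_of_full_cycle {f : Perm H} (hc : f.IsCycle) (hs : f.support = Finset.univ) :
    cycleCount f = 1 := by
  unfold cycleCount
  have hfix : Fintype.card {x // f x = x} = 0 := by
    rw [Fintype.card_eq_zero_iff]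
    refine ⟨fun ⟨z, hz⟩ => ?_⟩
    exact Equiv.Perm.mem_support.mp (hs ▸ Finset.mem_univ z) hz
  rw [hfix, hc.cycleType]
  simp

lemma full_cycle_of_count_one {f : Perm H} (h2 : 2 ≤ Fintype.card H)
    (h : cycleCount f = 1) : f.IsCycle ∧ f.support = Finset.univ := by
  unfold cycleCount at h
  rcases Nat.eq_zero_or_pos (Multiset.card f.cycleType) with h0 | hpos
  · exfalso
    have hf1 : f = 1 := Equiv.Perm.card_cycleType_eq_zero.mp h0
    have : ∀ x : H, f x = x := fun x => by rw [hf1]; rfl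
    have hcard : Fintype.card {x // f x = x} = Fintype.card H :=
      Fintype.card_congr (Equiv.subtypeUnivEquiv this)
    omega
  · have hc1 : Multiset.card f.cycleType = 1 := by omega
    have hfix : Fintype.card {x // f x = x} = 0 := by omega
    refine ⟨Equiv.Perm.card_cycleType_eq_one.mp hc1, ?_⟩
    rw [Finset.eq_univ_iff_forall]
    intro z
    rw [Equiv.Perm.mem_support]
    intro hz
    rw [Fintype.card_eq_zero_iff] at hfix
    exact hfix.elim ⟨z, hz⟩

end SlicingAux

open SlicingAux in
/-- the slicing operation: let `(H, α, σ̄)` be a unicellular map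
of genus `g + 1` and `a₁, a₂, a₃` three half-edges in a single cycle `v̄` of
`σ̄`, appearing in that cyclic order around `v̄` (so that `v̄` can be written
`(a₁, h¹₂, …, a₂, h¹₃, …, a₃, h¹₁, …)`), and intertwined, i.e. they occur in
the opposite cyclic order `(a₁, …, a₃, …, a₂, …)` in the face `γ̄ = ασ̄`.
Replacing `v̄` by the product of the three cycles
`(a₁,h¹₁,…)(a₂,h¹₂,…)(a₃,h¹₃,…)` yields exactly the permutation
`σ = σ̄ * (swap a₂ a₃ * swap a₁ a₂)`; then `ασ` is again a single `2n`-cycle,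
and the resulting unicellular map has genus `g`. -/
theorem slicing_decreases_genus {H : Type*} [Fintype H] [DecidableEq H]
    (n g : ℕ) (hn : 1 ≤ n) (hcard : Fintype.card H = 2 * n)
    (α σ' : Equiv.Perm H)
    (hinv : α * α = 1) (hfp : ∀ h : H, α h ≠ h)
    (hface : (α * σ').IsCycle ∧ (α * σ').support = Finset.univ)
    (hgenus : cycleCount σ' + 2 * (g + 1) = n + 1)
    (a₁ a₂ a₃ : H)
    (hne12 : a₁ ≠ a₂) (hne13 : a₁ ≠ a₃) (hne23 : a₂ ≠ a₃)
    (hc2 : σ'.SameCycle a₁ a₂) (hc3 : σ'.SameCycle a₁ a₃)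
    (hvorder : hitTime σ' a₁ a₂ < hitTime σ' a₁ a₃)
    (hintertwined : hitTime (α * σ') a₁ a₃ < hitTime (α * σ') a₁ a₂)
    (σ : Equiv.Perm H)
    (hσ : σ = σ' * (Equiv.swap a₂ a₃ * Equiv.swap a₁ a₂)) :
    (α * σ).IsCycle ∧ (α * σ).support = Finset.univ ∧
      cycleCount σ + 2 * g = n + 1 := by
  classical
  set γ : Equiv.Perm H := α * σ' with hγ
  obtain ⟨hγc, hγs⟩ := hface
  have h2card : 2 ≤ Fintype.card H := by omega
  have hγfix : ∀ z : H, γ z ≠ z := fun z =>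
    Equiv.Perm.mem_support.mp (by rw [hγs]; exact Finset.mem_univ z)
  have hγsc : ∀ z w : H, γ.SameCycle z w := fun z w => hγc.sameCycle (hγfix z) (hγfix w)
  -- vertex side: two successive splittings
  have hsc23 : σ'.SameCycle a₂ a₃ := hc2.symm.trans hc3
  obtain ⟨ht2pos, ht2eq⟩ := hitTime_spec hc2
  have hW : ((σ' * Equiv.swap a₂ a₃) ^ hitTime σ' a₁ a₂) a₁ = a₂ := by
    rw [W1 σ' a₂ a₃ a₁ _ ?_]
    · exact ht2eq
    intro j hj
    constructor
    · rcases Nat.eq_zero_or_pos j with rfl | hjp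
      · simpa using hne12
      · exact hitTime_min hjp hj
    · intro he
      rcases Nat.eq_zero_or_pos j with rfl | hjp
      · simp only [pow_zero, Equiv.Perm.one_apply] at he
        exact hne13 he
      · have : hitTime σ' a₁ a₃ ≤ j :=
          Nat.sInf_le (show j ∈ {k : ℕ | 0 < k ∧ (σ' ^ k) a₁ = a₃} from ⟨hjp, he⟩)
        omega
  have hsc12' : (σ' * Equiv.swap a₂ a₃).SameCycle a₁ a₂ :=
    ⟨(hitTime σ' a₁ a₂ : ℤ), by rw [zpow_natCast]; exact hW⟩
  have hcount2 : cycleCount σ = cycleCount σ' + 2 := by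
    rw [hσ, ← mul_assoc, split_count _ hne12 hsc12', split_count σ' hne23 hsc23]
  -- face side
  obtain ⟨hspos, hseq⟩ := hitTime_spec (hγsc a₁ a₃)
  obtain ⟨htpos, hteq⟩ := hitTime_spec (hγsc a₁ a₂)
  obtain ⟨hPpos, hPeq⟩ := hitTime_spec (Equiv.Perm.SameCycle.refl γ a₁)
  set s := hitTime γ a₁ a₃ with hsdef
  set t := hitTime γ a₁ a₂ with htdef
  set P := hitTime γ a₁ a₁ with hPdef
  have hst : s < t := hintertwined
  have ht_lt_P : t < P := hit_lt_period γ hne12 (hγsc a₁ a₂)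
  have hMpos : 0 < P - t := by omega
  have hMeq : (γ ^ (P - t)) a₂ = a₁ := by
    rw [← hteq, ← Equiv.Perm.mul_apply, ← pow_add, Nat.sub_add_cancel ht_lt_P.le]
    exact hPeq
  have Hno2 : ∀ j, 0 < j → j < P - t → (γ ^ j) a₂ ≠ a₂ := by
    intro j hj hjM he
    have h2 : (γ ^ t) ((γ ^ j) a₁) = (γ ^ t) a₁ := by
      rw [← Equiv.Perm.mul_apply, ← pow_add, Nat.add_comm t j, pow_add,
        Equiv.Perm.mul_apply, hteq]
      exact he
    have h3 := (γ ^ t).injective h2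
    exact hitTime_min hj (by omega) h3
  have Hno3 : ∀ j, 0 < j → j < P - t → (γ ^ j) a₂ ≠ a₃ := by
    intro j hj hjM he
    have h1 : (γ ^ (j + t)) a₁ = a₃ := by
      rw [pow_add, Equiv.Perm.mul_apply, hteq]
      exact he
    have hjt : j + t < P := by omega
    have h3 : (γ ^ s) ((γ ^ (j + t - s)) a₁) = (γ ^ s) a₁ := by
      rw [← Equiv.Perm.mul_apply, ← pow_add, Nat.add_sub_cancel' (by omega : s ≤ j + t),
        h1, hseq]
    have h4 := (γ ^ s).injective h3
    exact hitTime_min (by omega) (by omega) h4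
  have hW2 := W2 γ a₂ a₃ (P - t) hMpos (fun j h1 h2 => ⟨Hno2 j h1 h2, Hno3 j h1 h2⟩)
  have hsc31 : (γ * Equiv.swap a₂ a₃).SameCycle a₃ a₁ :=
    ⟨((P - t : ℕ) : ℤ), by rw [zpow_natCast, hW2]; exact hMeq⟩
  have hn23 : ¬ (γ * Equiv.swap a₂ a₃).SameCycle a₂ a₃ := F4 γ hne23 (hγsc a₂ a₃)
  have hn12 : ¬ (γ * Equiv.swap a₂ a₃).SameCycle a₁ a₂ :=
    fun h => hn23 (hsc31.trans h).symm
  have hcγ1 : cycleCount (γ * Equiv.swap a₂ a₃) = 2 := by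
    rw [split_count γ hne23 (hγsc a₂ a₃), cycleCount_of_full_cycle hγc hγs]
  have hcγ : cycleCount ((γ * Equiv.swap a₂ a₃) * Equiv.swap a₁ a₂) = 1 := by
    have := merge_count (γ * Equiv.swap a₂ a₃) hne12 hn12
    omega
  have hγσ : α * σ = (γ * Equiv.swap a₂ a₃) * Equiv.swap a₁ a₂ := by
    rw [hσ, hγ, mul_assoc, mul_assoc]
  rw [← hγσ] at hcγ
  obtain ⟨hic, hsup⟩ := full_cycle_of_count_one h2card hcγ
  exact ⟨hic, hsup, by omega⟩
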